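/- Let G = (V,E) be a graph with n vertices and m edges and r ≤ n an integer with binom(r,2) ≤ m. Construct the SMTI instance I with: men of type 1 corresponding to edges of G, r men of type 2, n − r men of type 3; women of type 4 corresponding to vertices of G, binom(r,2) women of type 5, and m − binom(r,2) women of type 6. Type-level preferences (strict, most preferred first): type 1 ranks 6, 5, 4; types 2 and 3 each rank only type 4; type 4 ranks 2, 1, 3; types 5 and 6 each rank only type 1. Each type-1 man e = (v_j, v_l) considers the two type-4 women v_j and v_l exceptional, placing them in a tie strictly between type 6 and type 5 in his list. Then G contains a clique of size r if and only if I admits a complete stable matching. -/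

import Mathlib

variable (V : Type) [Fintype V] [DecidableEq V] (G : SimpleGraph V) [DecidableRel G.Adj] (r : ℕ)

/-- The men of the clique-reduction instance: type-1 men are the edges of `G`,
then `r` type-2 men and `card V − r` type-3 men. -/
abbrev CliqueMen : Type :=
  {e : Sym2 V // e ∈ G.edgeFinset} ⊕ (Fin r ⊕ Fin (Fintype.card V - r))

/-- The women of the clique-reduction instance: type-4 women are the vertices of
`G`, then `binom(r,2)` type-5 women and `m − binom(r,2)` type-6 women. -/
abbrev CliqueWom : Type :=
  V ⊕ (Fin (r.choose 2) ⊕ Fin (G.edgeFinset.card - r.choose 2))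

/-- Preference list of a man (smaller rank = more preferred, `none` = unacceptable).
A type-1 man `e` ranks: type 6 (rank 0), then his two exceptional women — the
endpoints of `e` — (rank 1), then type 5 (rank 2), then the other type-4 women
(rank 3).  Types 2 and 3 find exactly the type-4 women acceptable, all tied. -/
def cliqueManRank : CliqueMen V G r → CliqueWom V G r → Option ℕ
  | Sum.inl e, Sum.inl v => if v ∈ (e.1 : Sym2 V) then some 1 else some 3
  | Sum.inl _, Sum.inr (Sum.inl _) => some 2
  | Sum.inl _, Sum.inr (Sum.inr _) => some 0
  | Sum.inr _, Sum.inl _ => some 0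
  | Sum.inr _, Sum.inr _ => none

/-- Preference list of a woman: type-4 women rank type 2 (rank 0), then type 1
(rank 1), then type 3 (rank 2); types 5 and 6 find exactly the type-1 men
acceptable, all tied. -/
def cliqueWomRank : CliqueWom V G r → CliqueMen V G r → Option ℕ
  | Sum.inl _, Sum.inl _ => some 1
  | Sum.inl _, Sum.inr (Sum.inl _) => some 0
  | Sum.inl _, Sum.inr (Sum.inr _) => some 2
  | Sum.inr _, Sum.inl _ => some 0
  | Sum.inr _, Sum.inr _ => none

/-- `OptLt a b`: rank `a` is strictly better than rank `b` (where `none` means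
unacceptable/unmatched and any acceptable rank beats it). -/
def OptLt (a b : Option ℕ) : Prop := ∃ x, a = some x ∧ ∀ y, b = some y → x < y

/-- A complete matching (a bijection between men and women) is stable if it only
matches mutually acceptable pairs and admits no blocking pair. -/
def CliqueStableCSM (M : CliqueMen V G r ≃ CliqueWom V G r) : Prop :=
  (∀ a, (cliqueManRank V G r a (M a)).isSome = true ∧
        (cliqueWomRank V G r (M a) a).isSome = true) ∧
  ¬ ∃ a w, M a ≠ w ∧ OptLt (cliqueManRank V G r a w) (cliqueManRank V G r a (M a)) ∧
      OptLt (cliqueWomRank V G r w a) (cliqueWomRank V G r w (M.symm w))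

/-- Generic stability criterion: any complete matching that sends type-1 men to
type-5/6 women, type-2/3 men to type-4 women, and such that the endpoints of an
edge matched to a type-5 woman are matched to type-2 men, is stable. -/
lemma genericStable (M : CliqueMen V G r ≃ CliqueWom V G r)
    (h1 : ∀ e, ∃ c, M (Sum.inl e) = Sum.inr c)
    (h2 : ∀ x, ∃ v, M (Sum.inr x) = Sum.inl v)
    (h3 : ∀ e w5, M (Sum.inl e) = Sum.inr (Sum.inl w5) →
          ∀ v ∈ (e.1 : Sym2 V), ∃ y : Fin r, M.symm (Sum.inl v) = Sum.inr (Sum.inl y)) :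
    CliqueStableCSM V G r M := by
  constructor
  · intro a
    rcases a with e | x
    · obtain ⟨c, hc⟩ := h1 e
      rw [hc]
      rcases c with w5 | w6 <;> simp [cliqueManRank, cliqueWomRank]
    · obtain ⟨v, hv⟩ := h2 x
      rw [hv]
      rcases x with y | z <;> simp [cliqueManRank, cliqueWomRank]
  · rintro ⟨a, w, hne, ⟨xm, hxm, hym⟩, ⟨xw, hxw, hyw⟩⟩
    rcases a with e | x
    · obtain ⟨c, hc⟩ := h1 e
      rcases w with v | c'
      · -- w is a type-4 woman
        by_cases hv : v ∈ (e.1 : Sym2 V)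
        · rcases c with w5 | w6
          · -- e matched to type-5: endpoint v is matched to a type-2 man
            obtain ⟨y, hy⟩ := h3 e w5 hc v hv
            rw [hy] at hyw
            have h0 := hyw 0 rfl
            omega
          · -- e matched to type-6 woman: rank 0, cannot improve
            rw [hc] at hym
            have h0 := hym 0 rfl
            omega
        · -- v not an endpoint: rank 3 never improves on 2 or 0
          simp only [cliqueManRank, if_neg hv] at hxm
          cases hxm
          rw [hc] at hym
          rcases c with w5 | w6
          · have := hym 2 rfl; omega
          · have := hym 0 rfl; omega
      · -- w is a type-5/6 woman: her rank of e is 0 and her partner is type-1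
        have hpart : ∃ e', M.symm (Sum.inr c') = Sum.inl e' := by
          rcases hp : M.symm (Sum.inr c') with e' | x'
          · exact ⟨e', rfl⟩
          · obtain ⟨v', hv'⟩ := h2 x'
            rw [← hp, Equiv.apply_symm_apply] at hv'
            cases hv'
        obtain ⟨e', he'⟩ := hpart
        rw [he'] at hyw
        rcases c' with w5 | w6
        · simp only [cliqueWomRank] at hxw hyw
          cases hxw
          have := hyw 0 rfl
          omega
        · simp only [cliqueWomRank] at hxw hyw
          cases hxw
          have := hyw 0 rfl
          omega
    · -- a is type 2/3: matched to a type-4 woman at rank 0, cannot improve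
      obtain ⟨v, hv⟩ := h2 x
      rw [hv] at hym
      rcases w with v' | c'
      · rcases x with y | z <;>
        · simp only [cliqueManRank] at hxm hym
          cases hxm
          have := hym 0 rfl
          omega
      · rcases x with y | z <;> simp [cliqueManRank] at hxm
      
/-- The number of edges of `G` inside a clique of size `r` is `r.choose 2`. -/
lemma cardCliqueEdges (S : Finset V) (hS : G.IsNClique r S) :
    Fintype.card {e : {e : Sym2 V // e ∈ G.edgeFinset} // ∀ v ∈ (e.1 : Sym2 V), v ∈ S}
      = r.choose 2 := by
  classical
  have key : ∀ p : Sym2 {x // x ∈ S}, ¬ p.IsDiag →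
      (p.map Subtype.val ∈ G.edgeFinset ∧ ∀ v ∈ p.map Subtype.val, v ∈ S) := by
    intro p
    induction p using Sym2.ind with
    | _ u v =>
      intro hd
      rw [Sym2.mk_isDiag_iff] at hd
      have hadj : G.Adj u.1 v.1 :=
        hS.1 (Finset.mem_coe.mpr u.2) (Finset.mem_coe.mpr v.2)
          (fun h => hd (Subtype.ext h))
      constructor
      · rw [Sym2.map_pair_eq, SimpleGraph.mem_edgeFinset, SimpleGraph.mem_edgeSet]
        exact hadj
      · intro x hx
        rw [Sym2.map_pair_eq, Sym2.mem_iff] at hx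
        rcases hx with rfl | rfl
        · exact u.2
        · exact v.2
  let F : {p : Sym2 {x // x ∈ S} // ¬ p.IsDiag} →
      {e : {e : Sym2 V // e ∈ G.edgeFinset} // ∀ v ∈ (e.1 : Sym2 V), v ∈ S} :=
    fun p => ⟨⟨p.1.map Subtype.val, (key p.1 p.2).1⟩, (key p.1 p.2).2⟩
  have hbij : Function.Bijective F := by
    constructor
    · intro p q hpq
      apply Subtype.ext
      apply Sym2.map.injective Subtype.val_injective
      exact congrArg (fun z => z.1.1) hpq
    · rintro ⟨⟨e, he⟩, hP⟩
      refine ⟨⟨e.attachWith hP, ?_⟩, ?_⟩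
      · rw [← Sym2.isDiag_map Subtype.val_injective, Sym2.attachWith,
          Sym2.pmap_subtype_map_subtypeVal]
        exact SimpleGraph.not_isDiag_of_mem_edgeSet _ (SimpleGraph.mem_edgeFinset.mp he)
      · apply Subtype.ext
        apply Subtype.ext
        exact Sym2.pmap_subtype_map_subtypeVal e hP
  rw [← Fintype.card_of_bijective hbij, Sym2.card_subtype_not_diag, Fintype.card_coe, hS.2]

/-- `G` contains a clique of size `r` iff the clique-reduction
(2,Any)-exception-typed SMTI instance admits a complete stable matching. -/
theorem clique_iff_complete_stable_matching
    (hr : r ≤ Fintype.card V) (hm : r.choose 2 ≤ G.edgeFinset.card) :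
    (∃ s : Finset V, G.IsNClique r s) ↔
    ∃ M : CliqueMen V G r ≃ CliqueWom V G r, CliqueStableCSM V G r M := by
  classical
  constructor
  · rintro ⟨S, hS⟩
    set P : {e : Sym2 V // e ∈ G.edgeFinset} → Prop :=
      fun e => ∀ v ∈ (e.1 : Sym2 V), v ∈ S with hPdef
    have cardP : Fintype.card {e // P e} = r.choose 2 := cardCliqueEdges V G r S hS
    have cardNP : Fintype.card {e // ¬ P e} = G.edgeFinset.card - r.choose 2 := by
      rw [Fintype.card_subtype_compl, cardP, Fintype.card_coe]
    have cardS : Fintype.card {x // x ∈ S} = r := by rw [Fintype.card_coe, hS.2]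
    have cardSc : Fintype.card {x // ¬ x ∈ S} = Fintype.card V - r := by
      rw [Fintype.card_subtype_compl, cardS]
    let e1 : {e : Sym2 V // e ∈ G.edgeFinset} ≃
        (Fin (r.choose 2) ⊕ Fin (G.edgeFinset.card - r.choose 2)) :=
      (Equiv.sumCompl P).symm.trans
        (Equiv.sumCongr (Fintype.equivFinOfCardEq cardP) (Fintype.equivFinOfCardEq cardNP))
    let e2 : (Fin r ⊕ Fin (Fintype.card V - r)) ≃ V :=
      (Equiv.sumCongr (Fintype.equivFinOfCardEq cardS).symm
        (Fintype.equivFinOfCardEq cardSc).symm).trans (Equiv.sumCompl (· ∈ S))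
    let M : CliqueMen V G r ≃ CliqueWom V G r :=
      (Equiv.sumCongr e1 e2).trans (Equiv.sumComm _ _)
    have hM1 : ∀ e, M (Sum.inl e) = Sum.inr (e1 e) := fun e => rfl
    have hM2 : ∀ x, M (Sum.inr x) = Sum.inl (e2 x) := fun x => rfl
    have hMsymm : ∀ v : V, M.symm (Sum.inl v) = Sum.inr (e2.symm v) := fun v => rfl
    refine ⟨M, genericStable V G r M (fun e => ⟨e1 e, hM1 e⟩) (fun x => ⟨e2 x, hM2 x⟩) ?_⟩
    intro e w5 hc v hv
    -- from hc : M (inl e) = inr (inl w5), deduce P e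
    have hPe : P e := by
      by_contra hne
      rw [hM1 e] at hc
      have : e1 e = Sum.inl w5 := by exact Sum.inr.inj hc
      rw [show e1 e = (Equiv.sumCongr (Fintype.equivFinOfCardEq cardP)
        (Fintype.equivFinOfCardEq cardNP)) ((Equiv.sumCompl P).symm e) from rfl,
        Equiv.sumCompl_symm_apply_of_neg hne] at this
      simp at this
    have hvS : v ∈ S := hPe v hv
    refine ⟨(Fintype.equivFinOfCardEq cardS) ⟨v, hvS⟩, ?_⟩
    rw [hMsymm v]
    congr 1
    show (Equiv.sumCongr (Fintype.equivFinOfCardEq cardS).symm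
        (Fintype.equivFinOfCardEq cardSc).symm).symm ((Equiv.sumCompl (· ∈ S)).symm v)
      = Sum.inl ((Fintype.equivFinOfCardEq cardS) ⟨v, hvS⟩)
    rw [Equiv.sumCompl_symm_apply_of_pos hvS]
    rfl
  · rintro ⟨M, hacc, hblock⟩
    -- step 1: type-2/3 men are matched to type-4 women
    have h2 : ∀ x : Fin r ⊕ Fin (Fintype.card V - r), ∃ v, M (Sum.inr x) = Sum.inl v := by
      intro x
      rcases h : M (Sum.inr x) with v | c
      · exact ⟨v, rfl⟩
      · have := (hacc (Sum.inr x)).1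
        rw [h] at this
        rcases c with c | c <;> simp [cliqueManRank] at this
    let f : (Fin r ⊕ Fin (Fintype.card V - r)) → V := fun x => (h2 x).choose
    have hf : ∀ x, M (Sum.inr x) = Sum.inl (f x) := fun x => (h2 x).choose_spec
    have finj : Function.Injective f := by
      intro x y hxy
      have : M (Sum.inr x) = M (Sum.inr y) := by rw [hf x, hf y, hxy]
      exact Sum.inr.inj (M.injective this)
    have fbij : Function.Bijective f := by
      refine (Fintype.bijective_iff_injective_and_card f).mpr ⟨finj, ?_⟩
      simp [Fintype.card_sum]
      omega
    -- every type-4 woman is matched to a type-2/3 man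
    have hwom : ∀ v : V, ∃ x, M.symm (Sum.inl v) = Sum.inr x := by
      intro v
      obtain ⟨x, hx⟩ := fbij.2 v
      exact ⟨x, by rw [← hx, ← hf x, Equiv.symm_apply_apply]⟩
    -- step 2: every type-5 woman is matched to a type-1 man
    have h5 : ∀ w : Fin (r.choose 2), ∃ e, M.symm (Sum.inr (Sum.inl w)) = Sum.inl e := by
      intro w
      rcases h : M.symm (Sum.inr (Sum.inl w)) with e | x
      · exact ⟨e, rfl⟩
      · have := hf x
        rw [← h, Equiv.apply_symm_apply] at this
        cases this
    let ew : Fin (r.choose 2) → {e : Sym2 V // e ∈ G.edgeFinset} := fun w => (h5 w).choose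
    have hew : ∀ w, M.symm (Sum.inr (Sum.inl w)) = Sum.inl (ew w) := fun w => (h5 w).choose_spec
    have hewM : ∀ w, M (Sum.inl (ew w)) = Sum.inr (Sum.inl w) := by
      intro w
      rw [← hew w, Equiv.apply_symm_apply]
    -- the clique candidate
    let S : Finset V := Finset.image (fun y : Fin r => f (Sum.inl y)) Finset.univ
    have hScard : S.card = r := by
      rw [Finset.card_image_of_injective _ (fun a b hab => Sum.inl.inj (finj hab)),
        Finset.card_univ, Fintype.card_fin]
    have hmemS : ∀ v : V, v ∈ S ↔ ∃ y : Fin r, M.symm (Sum.inl v) = Sum.inr (Sum.inl y) := by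
      intro v
      constructor
      · intro hv
        obtain ⟨y, _, hy⟩ := Finset.mem_image.mp hv
        exact ⟨y, by rw [← hy, ← hf (Sum.inl y), Equiv.symm_apply_apply]⟩
      · rintro ⟨y, hy⟩
        have : M (Sum.inr (Sum.inl y)) = Sum.inl v := by
          rw [← hy, Equiv.apply_symm_apply]
        rw [hf (Sum.inl y)] at this
        exact Finset.mem_image.mpr ⟨y, Finset.mem_univ y, Sum.inl.inj this⟩
    -- step 3: endpoints of type-5 matched edges lie in S
    have hend : ∀ w : Fin (r.choose 2), ∀ v ∈ ((ew w).1 : Sym2 V), v ∈ S := by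
      intro w v hv
      by_contra hvS
      obtain ⟨x, hx⟩ := hwom v
      rcases x with y | z
      · exact hvS ((hmemS v).mpr ⟨y, hx⟩)
      · -- blocking pair (ew w, v)
        apply hblock
        refine ⟨Sum.inl (ew w), Sum.inl v, ?_, ?_, ?_⟩
        · rw [hewM w]; simp
        · rw [hewM w]
          refine ⟨1, ?_, ?_⟩
          · simp [cliqueManRank, hv]
          · intro y hy
            simp only [cliqueManRank] at hy
            cases hy
            omega
        · rw [hx]
          refine ⟨1, rfl, ?_⟩
          intro y hy
          simp only [cliqueWomRank] at hy
          cases hy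
          omega
    -- step 4: S is a clique
    have cardS : Fintype.card {x // x ∈ S} = r := by rw [Fintype.card_coe, hScard]
    let g : Fin (r.choose 2) → {p : Sym2 {x // x ∈ S} // ¬ p.IsDiag} := fun w =>
      ⟨((ew w).1 : Sym2 V).attachWith (hend w), by
        rw [← Sym2.isDiag_map Subtype.val_injective, Sym2.attachWith,
          Sym2.pmap_subtype_map_subtypeVal]
        exact SimpleGraph.not_isDiag_of_mem_edgeSet _
          (SimpleGraph.mem_edgeFinset.mp (ew w).2)⟩
    have ginj : Function.Injective g := by
      intro w w' hww
      have h1 : (((ew w).1 : Sym2 V).attachWith (hend w)).map Subtype.val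
          = (((ew w').1 : Sym2 V).attachWith (hend w')).map Subtype.val := by
        exact congrArg (fun z => Sym2.map Subtype.val z.1) hww
      rw [Sym2.attachWith, Sym2.attachWith, Sym2.pmap_subtype_map_subtypeVal,
        Sym2.pmap_subtype_map_subtypeVal] at h1
      have : M (Sum.inl (ew w)) = M (Sum.inl (ew w')) := by
        congr 1
        exact congrArg Sum.inl (Subtype.ext h1)
      rw [hewM w, hewM w'] at this
      exact Sum.inl.inj (Sum.inr.inj this)
    have gbij : Function.Bijective g := by
      refine (Fintype.bijective_iff_injective_and_card g).mpr ⟨ginj, ?_⟩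
      rw [Sym2.card_subtype_not_diag, cardS, Fintype.card_fin]
    refine ⟨S, ⟨?_, hScard⟩⟩
    intro u hu v hv huv
    obtain ⟨w, hw⟩ := gbij.2 ⟨s(⟨u, hu⟩, ⟨v, hv⟩), by
      rw [Sym2.mk_isDiag_iff]
      exact fun h => huv (congrArg Subtype.val h)⟩
    have : ((ew w).1 : Sym2 V) = s(u, v) := by
      have h1 := congrArg (fun z => Sym2.map Subtype.val z.1) hw
      simp only [g] at h1
      rw [Sym2.attachWith, Sym2.pmap_subtype_map_subtypeVal, Sym2.map_pair_eq] at h1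
      exact h1
    have := (ew w).2
    rw [‹((ew w).1 : Sym2 V) = s(u, v)›, SimpleGraph.mem_edgeFinset,
      SimpleGraph.mem_edgeSet] at this
    exact this
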